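/- Let V1,...,Vp be real inner product spaces and V their tensor product with the induced inner product. A nonzero rank-one tensor x = x1 ⊗ ... ⊗ xp is a critical point of the squared-distance function d_v(x) = ‖v - x‖² on the manifold of nonzero rank-one tensors if and only if for every i = 1,...,p, the contraction of v with x1 ⊗ ... ⊗ x̂i ⊗ ... ⊗ xp (omitting the i-th factor, using the inner products) equals (∏_{j ≠ i} ⟨xj, xj⟩) · xi. -/

import Mathlib

open BigOperators RealInnerProductSpace Finset

noncomputable section

/-- The rank-one tensor `x₁ ⊗ ⋯ ⊗ x_p`, viewed as a multi-indexed array. -/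
def rk1 {p : ℕ} (n : Fin p → ℕ) (x : ∀ i, EuclideanSpace ℝ (Fin (n i))) :
    EuclideanSpace ℝ (∀ i, Fin (n i)) :=
  WithLp.toLp 2 (fun α => ∏ i, x i (α i))

/-- The contraction `⟨v | x₁ ⊗ ⋯ x̂ᵢ ⋯ ⊗ x_p⟩ ∈ Vᵢ`. -/
def contr {p : ℕ} (n : Fin p → ℕ) (v : EuclideanSpace ℝ (∀ i, Fin (n i)))
    (x : ∀ i, EuclideanSpace ℝ (Fin (n i))) (i : Fin p) :
    EuclideanSpace ℝ (Fin (n i)) :=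
  WithLp.toLp 2 (fun a => ∑ α : ∀ j, Fin (n j),
    if α i = a then v α * ∏ j ∈ univ.erase i, x j (α j) else 0)

lemma inner_rk1_update {p : ℕ} (n : Fin p → ℕ) (v : EuclideanSpace ℝ (∀ i, Fin (n i)))
    (x : ∀ i, EuclideanSpace ℝ (Fin (n i))) (i : Fin p)
    (y : EuclideanSpace ℝ (Fin (n i))) :
    ⟪v, rk1 n (Function.update x i y)⟫ = ⟪contr n v x i, y⟫ := by
  simp only [PiLp.inner_apply, RCLike.inner_apply', conj_trivial, rk1, contr,
    Finset.sum_mul, ite_mul, zero_mul]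
  rw [Finset.sum_comm]
  refine Finset.sum_congr rfl fun α _ => ?_
  rw [Finset.sum_ite_eq univ (α i)
      (fun a => v α * (∏ j ∈ univ.erase i, x j (α j)) * y a), if_pos (mem_univ _)]
  rw [← Finset.mul_prod_erase univ _ (Finset.mem_univ i), Function.update_self]
  rw [Finset.prod_congr rfl
      (fun j hj => by rw [Function.update_of_ne (Finset.mem_erase.1 hj).1])]
  ring

lemma rk1_inner_rk1 {p : ℕ} (n : Fin p → ℕ)
    (x z : ∀ i, EuclideanSpace ℝ (Fin (n i))) :
    ⟪rk1 n x, rk1 n z⟫ = ∏ i, ⟪x i, z i⟫ := by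
  simp only [PiLp.inner_apply, RCLike.inner_apply, conj_trivial, rk1]
  rw [Fintype.prod_sum]
  exact Finset.sum_congr rfl fun α _ => (Finset.prod_mul_distrib).symm

lemma key {p : ℕ} (n : Fin p → ℕ) (v : EuclideanSpace ℝ (∀ i, Fin (n i)))
    (x : ∀ i, EuclideanSpace ℝ (Fin (n i))) (i : Fin p)
    (y : EuclideanSpace ℝ (Fin (n i))) :
    ⟪v - rk1 n x, rk1 n (Function.update x i y)⟫
      = ⟪contr n v x i - (∏ j ∈ univ.erase i, ⟪x j, x j⟫) • x i, y⟫ := by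
  rw [inner_sub_left, inner_sub_left, inner_rk1_update, rk1_inner_rk1,
    real_inner_smul_left]
  congr 1
  rw [← Finset.mul_prod_erase univ (fun j => ⟪x j, Function.update x i y j⟫)
      (Finset.mem_univ i), Function.update_self]
  rw [Finset.prod_congr rfl
      (fun j hj => by rw [Function.update_of_ne (Finset.mem_erase.1 hj).1])]
  rw [real_inner_comm]
  ring

/-- A nonzero rank-one tensor is a critical point of `d_v` (i.e. `v - x` is orthogonal
to the tangent space `∑ᵢ x₁ ⊗ ⋯ ⊗ Vᵢ ⊗ ⋯ ⊗ x_p`) iff each contraction of `v` equals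
`(∏_{j ≠ i} ⟨xⱼ, xⱼ⟩) • xᵢ`. -/
theorem critical_rank_one_iff {p : ℕ} (n : Fin p → ℕ)
    (v : EuclideanSpace ℝ (∀ i, Fin (n i)))
    (x : ∀ i, EuclideanSpace ℝ (Fin (n i))) (hx : ∀ i, x i ≠ 0) :
    (∀ (i : Fin p) (y : EuclideanSpace ℝ (Fin (n i))),
        ⟪v - rk1 n x, rk1 n (Function.update x i y)⟫ = 0)
      ↔ (∀ i, contr n v x i = (∏ j ∈ univ.erase i, ⟪x j, x j⟫) • x i) := by
  refine forall_congr' fun i => ?_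
  simp only [key]
  constructor
  · intro h
    have := h (contr n v x i - (∏ j ∈ univ.erase i, ⟪x j, x j⟫) • x i)
    rw [real_inner_self_eq_norm_sq] at this
    have h0 : contr n v x i - (∏ j ∈ univ.erase i, ⟪x j, x j⟫) • x i = 0 := by
      rw [← norm_eq_zero]
      nlinarith [norm_nonneg (contr n v x i - (∏ j ∈ univ.erase i, ⟪x j, x j⟫) • x i)]
    exact sub_eq_zero.1 h0
  · intro h y
    rw [sub_eq_zero.2 h, inner_zero_left]
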